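/- Let n ≥ 2, let g : {1,…,n} → ℝ take positive pairwise distinct values, and let σ be a permutation of {1,…,n} with h_k := g(σ(k)) satisfying 0 < h₁ < h₂ < ⋯ < h_n. Let R be the n×n permutation matrix with (Rv)_k = v_{σ(k)}, and define the tridiagonal matrix P ∈ ℝ^{n×n} by P_{11} = h₂/(h₁(h₂−h₁)), P_{kk} = (h_{k+1}−h_{k−1})/((h_{k+1}−h_k)(h_k−h_{k−1})) for 2 ≤ k ≤ n−1, P_{nn} = 1/(h_n−h_{n−1}), P_{k,k+1} = P_{k+1,k} = −1/(h_{k+1}−h_k) for 1 ≤ k ≤ n−1, and P_{ij} = 0 for |i−j| > 1. Then the n×n matrix K with entries K_{ij} = min(g(i), g(j)) is invertible with K^{−1} = Rᵀ P R. -/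

import Mathlib

open Matrix

/-- The sorted values `h_k = g(σ(k))` (0-indexed, size `n+2`), extended by 0 outside. -/
noncomputable def sortedVals (n : ℕ) (g : Fin (n + 2) → ℝ) (σ : Equiv.Perm (Fin (n + 2))) (k : ℕ) : ℝ :=
  if hk : k < n + 2 then g (σ ⟨k, hk⟩) else 0

/-- The tridiagonal matrix `P` (inverse of the Gram matrix of the first-order spline kernel
at the sorted points): 0-indexed version of the matrix in STATEMENT 12. -/
noncomputable def Pmat (n : ℕ) (g : Fin (n + 2) → ℝ) (σ : Equiv.Perm (Fin (n + 2))) :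
    Matrix (Fin (n + 2)) (Fin (n + 2)) ℝ :=
  Matrix.of fun i j =>
    if (i : ℕ) = (j : ℕ) then
      if (i : ℕ) = 0 then
        sortedVals n g σ 1 / (sortedVals n g σ 0 * (sortedVals n g σ 1 - sortedVals n g σ 0))
      else if (i : ℕ) = n + 1 then
        1 / (sortedVals n g σ (n + 1) - sortedVals n g σ n)
      else
        (sortedVals n g σ ((i : ℕ) + 1) - sortedVals n g σ ((i : ℕ) - 1)) /
          ((sortedVals n g σ ((i : ℕ) + 1) - sortedVals n g σ (i : ℕ)) *
            (sortedVals n g σ (i : ℕ) - sortedVals n g σ ((i : ℕ) - 1)))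
    else if (i : ℕ) + 1 = (j : ℕ) then
      -(1 / (sortedVals n g σ (j : ℕ) - sortedVals n g σ (i : ℕ)))
    else if (j : ℕ) + 1 = (i : ℕ) then
      -(1 / (sortedVals n g σ (i : ℕ) - sortedVals n g σ (j : ℕ)))
    else 0

/-- The permutation matrix `R` of `σ`, satisfying `(R v)_k = v_{σ(k)}`. -/
noncomputable def Rmat (n : ℕ) (σ : Equiv.Perm (Fin (n + 2))) : Matrix (Fin (n + 2)) (Fin (n + 2)) ℝ :=
  Matrix.of fun i j => if j = σ i then 1 else 0

section core
variable {n : ℕ} {g : Fin (n + 2) → ℝ} {σ : Equiv.Perm (Fin (n + 2))}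

-- helpers (proved in aux.lean, assume here via axiom-free copies)
lemma sortedVals_val (j : Fin (n + 2)) : sortedVals n g σ (j : ℕ) = g (σ j) := by
  simp [sortedVals, j.isLt]

lemma sortedVals_lt (hmono : StrictMono fun k => g (σ k)) {a b : ℕ} (hab : a < b)
    (hb : b < n + 2) : sortedVals n g σ a < sortedVals n g σ b := by
  have ha : a < n + 2 := hab.trans hb
  simp only [sortedVals, dif_pos ha, dif_pos hb]
  exact hmono (show (⟨a, ha⟩ : Fin (n + 2)) < ⟨b, hb⟩ from hab)

lemma sortedVals_le (hmono : StrictMono fun k => g (σ k)) {a b : ℕ} (hab : a ≤ b)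
    (hb : b < n + 2) : sortedVals n g σ a ≤ sortedVals n g σ b := by
  rcases eq_or_lt_of_le hab with rfl | h
  · exact le_refl _
  · exact (sortedVals_lt hmono h hb).le

lemma sortedVals_pos (hpos : ∀ i, 0 < g i) {a : ℕ} (ha : a < n + 2) :
    0 < sortedVals n g σ a := by
  simp only [sortedVals, dif_pos ha]; exact hpos _

lemma sum_if_val (m : ℕ) (hm : m < n + 2) (c : Fin (n + 2) → ℝ) :
    ∑ j : Fin (n + 2), (if (j : ℕ) = m then c j else 0) = c ⟨m, hm⟩ := by
  rw [Finset.sum_eq_single (⟨m, hm⟩ : Fin (n + 2))]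
  · simp
  · intro b _ hb
    rw [if_neg (fun h => hb (Fin.ext h))]
  · intro h; exact absurd (Finset.mem_univ _) h

lemma sum_if_val' (m : ℕ) (hm : m < n + 2) (c : Fin (n + 2) → ℝ) :
    ∑ j : Fin (n + 2), (if m = (j : ℕ) then c j else 0) = c ⟨m, hm⟩ := by
  rw [← sum_if_val m hm c]
  exact Finset.sum_congr rfl fun j _ => if_congr eq_comm rfl rfl

lemma sum_if_val'_zero (m : ℕ) (hm : ¬ m < n + 2) (c : Fin (n + 2) → ℝ) :
    ∑ j : Fin (n + 2), (if m = (j : ℕ) then c j else 0) = 0 := by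
  apply Finset.sum_eq_zero
  intro j _
  rw [if_neg (by have := j.isLt; omega)]

lemma sum_if_succ (m : ℕ) (hm : m - 1 < n + 2) (hm1 : 1 ≤ m) (c : Fin (n + 2) → ℝ) :
    ∑ j : Fin (n + 2), (if (j : ℕ) + 1 = m then c j else 0) = c ⟨m - 1, hm⟩ := by
  rw [Finset.sum_eq_single (⟨m - 1, hm⟩ : Fin (n + 2))]
  · rw [if_pos (by simp only [Fin.val_mk]; omega)]
  · intro b _ hb
    rw [if_neg (fun h => hb (Fin.ext (by simp only [Fin.val_mk]; omega)))]
  · intro h; exact absurd (Finset.mem_univ _) h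

lemma sum_if_succ_zero (c : Fin (n + 2) → ℝ) :
    ∑ j : Fin (n + 2), (if (j : ℕ) + 1 = 0 then c j else 0) = 0 := by
  simp


lemma Ksorted_mul_P (hpos : ∀ i, 0 < g i) (hmono : StrictMono fun k => g (σ k)) :
    (Matrix.of fun i j : Fin (n + 2) => min (g (σ i)) (g (σ j))) * Pmat n g σ = 1 := by
  ext i k
  set H : ℕ → ℝ := sortedVals n g σ with hH
  have hdecomp : ∀ j : Fin (n + 2),
      Pmat n g σ j k =
        (if (j : ℕ) = (k : ℕ) then
            (if (j : ℕ) = 0 then H 1 / (H 0 * (H 1 - H 0))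
             else if (j : ℕ) = n + 1 then 1 / (H (n + 1) - H n)
             else (H ((j : ℕ) + 1) - H ((j : ℕ) - 1)) /
               ((H ((j : ℕ) + 1) - H (j : ℕ)) * (H (j : ℕ) - H ((j : ℕ) - 1))))
          else 0)
        + (if (j : ℕ) + 1 = (k : ℕ) then -(1 / (H (k : ℕ) - H (j : ℕ))) else 0)
        + (if (k : ℕ) + 1 = (j : ℕ) then -(1 / (H (j : ℕ) - H (k : ℕ))) else 0) := by
    intro j
    simp only [Pmat, Matrix.of_apply, hH]
    split_ifs <;> first | ring1 | (exfalso; omega)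
  rw [Matrix.mul_apply]
  have hsum : ∑ j, (Matrix.of fun i j : Fin (n + 2) => min (g (σ i)) (g (σ j))) i j * Pmat n g σ j k
      = (∑ j : Fin (n + 2), if (j : ℕ) = (k : ℕ) then min (H (i : ℕ)) (H (j : ℕ)) *
            (if (j : ℕ) = 0 then H 1 / (H 0 * (H 1 - H 0))
             else if (j : ℕ) = n + 1 then 1 / (H (n + 1) - H n)
             else (H ((j : ℕ) + 1) - H ((j : ℕ) - 1)) /
               ((H ((j : ℕ) + 1) - H (j : ℕ)) * (H (j : ℕ) - H ((j : ℕ) - 1)))) else 0)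
      + (∑ j : Fin (n + 2), if (j : ℕ) + 1 = (k : ℕ) then
            min (H (i : ℕ)) (H (j : ℕ)) * -(1 / (H (k : ℕ) - H (j : ℕ))) else 0)
      + (∑ j : Fin (n + 2), if (k : ℕ) + 1 = (j : ℕ) then
            min (H (i : ℕ)) (H (j : ℕ)) * -(1 / (H (j : ℕ) - H (k : ℕ))) else 0) := by
    rw [← Finset.sum_add_distrib, ← Finset.sum_add_distrib]
    apply Finset.sum_congr rfl
    intro j _
    have hvi : H ((i : ℕ)) = g (σ i) := sortedVals_val i
    have hvj : H ((j : ℕ)) = g (σ j) := sortedVals_val j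
    rw [Matrix.of_apply, hdecomp j, ← hvi, ← hvj]
    simp only [mul_add, mul_ite, mul_zero]
  rw [hsum, Matrix.one_apply]
  clear hsum hdecomp
  by_cases hk0 : (k : ℕ) = 0
  · -- k = 0
    simp only [hk0, Nat.zero_add]
    rw [sum_if_val 0 (by omega), sum_if_succ_zero, sum_if_val' 1 (by omega)]
    simp only [Fin.val_mk]
    rw [if_true]
    have h01 : H 0 < H 1 := sortedVals_lt hmono (by omega) (by omega)
    have h0p : 0 < H 0 := sortedVals_pos hpos (by omega)
    have hne0 : H 0 ≠ 0 := ne_of_gt h0p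
    have hne01 : H 1 - H 0 ≠ 0 := sub_ne_zero_of_ne (ne_of_gt h01)
    by_cases hi0 : (i : ℕ) = 0
    · rw [if_pos (Fin.ext (by omega))]
      simp only [hi0]
      rw [min_self, min_eq_left (sortedVals_le hmono (by omega) (by omega))]
      field_simp
      try simp only [← hH]
      try ring1
    · rw [if_neg (show ¬ i = k from fun h => hi0 (by rw [h, hk0]))]
      rw [min_eq_right (sortedVals_le hmono (by omega) i.isLt),
          min_eq_right (sortedVals_le hmono (by omega) i.isLt)]
      field_simp
      try simp only [← hH]
      try ring1
  · by_cases hkn : (k : ℕ) = n + 1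
    · -- k = n + 1
      simp only [hkn]
      rw [sum_if_val (n + 1) (by omega), sum_if_succ (n + 1) (by omega) (by omega),
          sum_if_val'_zero (n + 1 + 1) (by omega)]
      simp only [Fin.val_mk, Nat.add_sub_cancel]
      rw [if_true]
      have hlt : H n < H (n + 1) := sortedVals_lt hmono (by omega) (by omega)
      have hne : H (n + 1) - H n ≠ 0 := sub_ne_zero_of_ne (ne_of_gt hlt)
      by_cases hin : (i : ℕ) = n + 1
      · rw [if_pos (Fin.ext (by omega))]
        simp only [hin]
        rw [min_self, min_eq_right (sortedVals_le hmono (by omega) (by omega))]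
        simp only [Nat.add_one_ne_zero, if_false, ↓reduceIte]
        field_simp
        try simp only [← hH]
        try ring1
      · rw [if_neg (show ¬ i = k from fun h => hin (by rw [h, hkn]))]
        have hile : (i : ℕ) ≤ n := by have := i.isLt; omega
        rw [min_eq_left (sortedVals_le hmono (by omega) (by omega)),
            min_eq_left (sortedVals_le hmono hile (by omega))]
        simp only [Nat.add_one_ne_zero, if_false, ↓reduceIte]
        field_simp
        try simp only [← hH]
        try ring1
    · -- middle: 1 ≤ k ≤ n
      have hk1 : 1 ≤ (k : ℕ) := by omega
      have hk2 : (k : ℕ) ≤ n := by have := k.isLt; omega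
      rw [sum_if_val (k : ℕ) k.isLt, sum_if_succ (k : ℕ) (by omega) hk1,
          sum_if_val' ((k : ℕ) + 1) (by omega)]
      simp only [Fin.val_mk]
      rw [if_neg hk0, if_neg hkn]
      have d1 : H ((k : ℕ) - 1) < H (k : ℕ) := sortedVals_lt hmono (by omega) k.isLt
      have d2 : H (k : ℕ) < H ((k : ℕ) + 1) := sortedVals_lt hmono (by omega) (by omega)
      have hne1 : H (k : ℕ) - H ((k : ℕ) - 1) ≠ 0 := sub_ne_zero_of_ne (ne_of_gt d1)
      have hne2 : H ((k : ℕ) + 1) - H (k : ℕ) ≠ 0 := sub_ne_zero_of_ne (ne_of_gt d2)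
      rcases lt_trichotomy ((i : ℕ)) ((k : ℕ)) with hik | hik | hik
      · rw [if_neg (show ¬ i = k from fun h => by rw [h] at hik; omega)]
        rw [min_eq_left (sortedVals_le hmono hik.le k.isLt),
            min_eq_left (sortedVals_le hmono (by omega) (by omega)),
            min_eq_left (sortedVals_le hmono (by omega) (by omega))]
        field_simp
        try simp only [← hH]
        try ring1
      · rw [if_pos (Fin.ext hik)]
        simp only [hik]
        rw [min_self, min_eq_right (sortedVals_le hmono (by omega) k.isLt),
            min_eq_left (sortedVals_le hmono (by omega) (by omega))]
        field_simp
        try simp only [← hH]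
        try ring1
      · rw [if_neg (show ¬ i = k from fun h => by rw [h] at hik; omega)]
        rw [min_eq_right (sortedVals_le hmono hik.le i.isLt),
            min_eq_right (sortedVals_le hmono (by omega) i.isLt),
            min_eq_right (sortedVals_le hmono (by omega) i.isLt)]
        field_simp
        try simp only [← hH]
        try ring1


lemma Rmat_mul_apply (M : Matrix (Fin (n + 2)) (Fin (n + 2)) ℝ) (i j : Fin (n + 2)) :
    (Rmat n σ * M) i j = M (σ i) j := by
  rw [Matrix.mul_apply, Finset.sum_eq_single (σ i)]
  · simp [Rmat]
  · intro b _ hb; simp [Rmat, hb, Ne.symm hb]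
  · intro h; exact absurd (Finset.mem_univ _) h

lemma mul_Rmat_apply (M : Matrix (Fin (n + 2)) (Fin (n + 2)) ℝ) (i j : Fin (n + 2)) :
    (M * Rmat n σ) i j = M i (σ.symm j) := by
  rw [Matrix.mul_apply, Finset.sum_eq_single (σ.symm j)]
  · simp [Rmat]
  · intro b _ hb
    have : ¬ j = σ b := fun h => hb (by simp [h])
    simp [Rmat, this]
  · intro h; exact absurd (Finset.mem_univ _) h

lemma transpose_Rmat_mul (M : Matrix (Fin (n + 2)) (Fin (n + 2)) ℝ) (i j : Fin (n + 2)) :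
    ((Rmat n σ)ᵀ * M) i j = M (σ.symm i) j := by
  rw [Matrix.mul_apply, Finset.sum_eq_single (σ.symm i)]
  · simp [Rmat, Matrix.transpose_apply]
  · intro b _ hb
    have : ¬ i = σ b := fun h => hb (by simp [h])
    simp [Rmat, Matrix.transpose_apply, this]
  · intro h; exact absurd (Finset.mem_univ _) h

lemma Rmat_t_mul_self : (Rmat n σ)ᵀ * Rmat n σ = 1 := by
  ext i j
  rw [transpose_Rmat_mul]
  simp [Rmat, Matrix.one_apply, eq_comm]

lemma Rmat_mul_t_self : Rmat n σ * (Rmat n σ)ᵀ = 1 := by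
  ext i j
  rw [Rmat_mul_apply]
  simp [Rmat, Matrix.transpose_apply, Matrix.one_apply, eq_comm]

lemma K_conj (g : Fin (n + 2) → ℝ) :
    (Matrix.of fun i j : Fin (n + 2) => min (g i) (g j))
      = (Rmat n σ)ᵀ * (Matrix.of fun i j : Fin (n + 2) => min (g (σ i)) (g (σ j))) * Rmat n σ := by
  ext i j
  rw [mul_Rmat_apply, transpose_Rmat_mul]
  simp


end core

/-- For `n ≥ 2` (here matrix size `n+2`), if `g` takes positive pairwise-distinct
values and `σ` sorts them increasingly, then the Gram matrix `K_{ij} = min(g(i), g(j))` is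
invertible with `K⁻¹ = Rᵀ P R`. -/
theorem stmt_12 (n : ℕ) (g : Fin (n + 2) → ℝ) (hpos : ∀ i, 0 < g i)
    (hinj : Function.Injective g)
    (σ : Equiv.Perm (Fin (n + 2))) (hmono : StrictMono (fun k => g (σ k))) :
    IsUnit (Matrix.of fun i j : Fin (n + 2) => min (g i) (g j)) ∧
    (Matrix.of fun i j : Fin (n + 2) => min (g i) (g j))⁻¹
      = (Rmat n σ)ᵀ * Pmat n g σ * Rmat n σ := by

  set K : Matrix (Fin (n + 2)) (Fin (n + 2)) ℝ :=
    Matrix.of fun i j : Fin (n + 2) => min (g i) (g j) with hK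
  set Ms : Matrix (Fin (n + 2)) (Fin (n + 2)) ℝ :=
    Matrix.of fun i j : Fin (n + 2) => min (g (σ i)) (g (σ j)) with hMs
  set R := Rmat n σ with hR
  have hKP : Ms * Pmat n g σ = 1 := Ksorted_mul_P hpos hmono
  have hconj : K = Rᵀ * Ms * R := K_conj g
  have hmain : K * (Rᵀ * Pmat n g σ * R) = 1 := by
    rw [hconj]
    calc Rᵀ * Ms * R * (Rᵀ * Pmat n g σ * R)
        = Rᵀ * (Ms * ((R * Rᵀ) * (Pmat n g σ * R))) := by
          simp only [Matrix.mul_assoc]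
      _ = Rᵀ * (Ms * (Pmat n g σ * R)) := by rw [Rmat_mul_t_self, one_mul]
      _ = Rᵀ * ((Ms * Pmat n g σ) * R) := by simp only [Matrix.mul_assoc]
      _ = Rᵀ * R := by rw [hKP, one_mul]
      _ = 1 := Rmat_t_mul_self
  refine ⟨?_, Matrix.inv_eq_right_inv hmain⟩
  exact ⟨⟨K, Rᵀ * Pmat n g σ * R, hmain, mul_eq_one_comm.mp hmain⟩, rfl⟩
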